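/- Let T be a forest, k ≥ 3, and let Y be a 1-cross-cut of the k-expansion T^{(k)} (a set meeting each edge of T^{(k)} in exactly one vertex). Then the (k−1)-uniform hypergraph 𝒞 = {E ∖ Y : E an edge of T^{(k)}} is a generalized (k−1)-forest. -/

import Mathlib

/-- The `k`-expansion `T^(k)` of a graph `T`: each edge `e = xy` of `T` is replaced by the
`k`-set consisting of `x`, `y` and `k - 2` new vertices private to `e` (so new vertices of
distinct edges are distinct, and disjoint from `V(T)`). -/
def expansion (k : ℕ) {V : Type*} [Fintype V] [DecidableEq V] (T : SimpleGraph V)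
    [DecidableRel T.Adj] : Finset (Finset (V ⊕ Sym2 V × Fin (k - 2))) :=
  T.edgeFinset.image (fun e =>
    ((Finset.univ.filter (fun v => v ∈ e)).image Sum.inl) ∪
      (Finset.univ.image (fun i : Fin (k - 2) => Sum.inr (e, i))))

/-- `σ(T) = min { |X| + e(T ∖ X) : X independent in T }`. -/
noncomputable def graphSigma {V : Type*} (T : SimpleGraph V) : ℕ :=
  sInf {m | ∃ X : Set V, (∀ x ∈ X, ∀ y ∈ X, ¬ T.Adj x y) ∧ X.Finite ∧
    m = X.ncard + {e ∈ T.edgeSet | ∀ x ∈ X, x ∉ e}.ncard}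

/-- `τ(T)`: the minimum size of a set of vertices meeting every edge of `T`. -/
noncomputable def graphTau {V : Type*} (T : SimpleGraph V) : ℕ :=
  sInf {m | ∃ S : Set V, (∀ e ∈ T.edgeSet, ∃ x ∈ S, x ∈ e) ∧ S.Finite ∧ m = S.ncard}

/-- `H` contains a copy of the hypergraph `Ts` (a subhypergraph isomorphic to `Ts`). -/
def ContainsCopy {α β : Type*} [DecidableEq α] [DecidableEq β]
    (H : Finset (Finset β)) (Ts : Finset (Finset α)) : Prop :=
  ∃ f : α → β, Set.InjOn f ↑(Ts.sup id) ∧ ∀ E ∈ Ts, E.image f ∈ H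

/-- A generalized `m`-forest (edges together with defining sets). -/
inductive KForest {α : Type*} [DecidableEq α] (m : ℕ) :
    List (Finset α) → List (Finset α) → Prop
  | single (E : Finset α) (hE : E.card = m) : KForest m [E] []
  | extend {l As : List (Finset α)} (h : KForest m l As) (A B E : Finset α)
      (hE : E ∈ l) (hA : A ⊆ E) (hB : ∀ F ∈ l, Disjoint B F)
      (hcard : A.card + B.card = m) : KForest m (l ++ [A ∪ B]) (As ++ [A])

section AuxKF

variable {V : Type*} [Fintype V] [DecidableEq V]

/-- The expanded edge. -/
def exE (k : ℕ) (e : Sym2 V) : Finset (V ⊕ Sym2 V × Fin (k - 2)) :=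
  ((Finset.univ.filter (fun v => v ∈ e)).image Sum.inl) ∪
    (Finset.univ.image (fun i : Fin (k - 2) => Sum.inr (e, i)))

lemma mem_exE {k : ℕ} {e : Sym2 V} {z : V ⊕ Sym2 V × Fin (k - 2)} :
    z ∈ exE k e ↔ (∃ v, v ∈ e ∧ z = Sum.inl v) ∨ ∃ i, z = Sum.inr (e, i) := by
  simp [exE, eq_comm]

lemma card_exE {k : ℕ} (hk : 2 ≤ k) {e : Sym2 V} (hd : ¬ e.IsDiag) : (exE k e).card = k := by
  obtain ⟨x, y, rfl⟩ : ∃ x y, e = s(x, y) := by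
    induction e using Sym2.ind with | _ x y => exact ⟨x, y, rfl⟩
  have hxy : x ≠ y := by simpa using hd
  have h1 : (Finset.univ.filter (fun v => v ∈ s(x, y))) = {x, y} := by
    ext v; simp [Sym2.mem_iff]
  have hdisj : Disjoint ((Finset.univ.filter (fun v => v ∈ s(x, y))).image
      (Sum.inl : V → V ⊕ Sym2 V × Fin (k - 2)))
      (Finset.univ.image (fun i : Fin (k - 2) => Sum.inr (s(x, y), i))) := by
    rw [Finset.disjoint_left]
    rintro z hz hz'
    simp only [Finset.mem_image] at hz hz'
    obtain ⟨v, _, rfl⟩ := hz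
    obtain ⟨i, _, h⟩ := hz'
    exact absurd h (by simp)
  rw [exE, Finset.card_union_of_disjoint hdisj, h1,
    Finset.card_image_of_injective _ Sum.inl_injective,
    Finset.card_image_of_injective _ (fun i j hij => by simpa using hij)]
  simp [hxy]
  omega

lemma exE_inter {k : ℕ} {e f : Sym2 V} (hef : e ≠ f) {z : V ⊕ Sym2 V × Fin (k - 2)}
    (hz : z ∈ exE k e) (hz' : z ∈ exE k f) : ∃ v, v ∈ e ∧ v ∈ f ∧ z = Sum.inl v := by
  rw [mem_exE] at hz hz'
  rcases hz with ⟨v, hv, rfl⟩ | ⟨i, rfl⟩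
  · rcases hz' with ⟨w, hw, h⟩ | ⟨j, h⟩
    · have hwv : w = v := by simpa using h.symm
      exact ⟨v, hv, hwv ▸ hw, rfl⟩
    · simp at h
  · rcases hz' with ⟨w, _, h⟩ | ⟨j, h⟩
    · simp at h
    · exact absurd (by simpa using h : (e, i) = (f, j)) (by simp [hef])

lemma exists_leaf {G : SimpleGraph V} (hG : G.IsAcyclic) {a b : V} (hab : G.Adj a b) :
    ∃ x w : V, G.Adj x w ∧ ∀ z, G.Adj x z → z = w := by
  classical
  set N : Set ℕ := {n | ∃ u v : V, ∃ p : G.Walk u v, p.IsPath ∧ p.length = n} with hN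
  have h1 : 1 ∈ N := ⟨a, b, .cons hab .nil, by simp [hab.ne], by simp⟩
  have hbdd : BddAbove N := by
    refine ⟨Fintype.card V, ?_⟩
    rintro n ⟨u, v, p, hp, rfl⟩
    exact le_of_lt hp.length_lt
  have hone : 1 ≤ sSup N := le_csSup hbdd h1
  obtain ⟨u, v, p, hp, hl⟩ := Nat.sSup_mem ⟨1, h1⟩ hbdd
  cases p with
  | nil => rw [SimpleGraph.Walk.length_nil] at hl; omega
  | @cons _ w0 _ h q =>
    refine ⟨u, w0, h, fun z hz => ?_⟩
    set p := SimpleGraph.Walk.cons h q with hpdef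
    by_cases hzs : z ∈ p.support
    · have hd : (p.dropUntil z hzs).IsPath := hp.dropUntil hzs
      have hnd : ((p.takeUntil z hzs).support ++ (p.dropUntil z hzs).support.tail).Nodup := by
        rw [← SimpleGraph.Walk.support_append, SimpleGraph.Walk.take_spec]
        exact hp.support_nodup
      have hu : u ∉ (p.dropUntil z hzs).support := by
        intro hu
        rw [SimpleGraph.Walk.support_eq_cons] at hu
        rcases List.mem_cons.mp hu with h' | h'
        · exact hz.ne h'
        · exact (List.disjoint_of_nodup_append hnd) (SimpleGraph.Walk.start_mem_support _) h'
      have hr : (SimpleGraph.Walk.cons hz (p.dropUntil z hzs)).IsPath := by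
        rw [SimpleGraph.Walk.cons_isPath_iff]; exact ⟨hd, hu⟩
      have hpq := hG.path_unique ⟨_, hr⟩ ⟨p, hp⟩
      have heq : SimpleGraph.Walk.cons hz (p.dropUntil z hzs) = p := congrArg Subtype.val hpq
      have h1' : p.getVert 1 = z := by
        rw [← heq]; exact (by rw [SimpleGraph.Walk.getVert_cons_succ, SimpleGraph.Walk.getVert_zero])
      have h2' : p.getVert 1 = w0 := by
        rw [hpdef, SimpleGraph.Walk.getVert_cons_succ, SimpleGraph.Walk.getVert_zero]
      rw [← h1', h2']
    · exfalso
      have hmem : p.length + 1 ∈ N :=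
        ⟨z, v, .cons hz.symm p, by rw [SimpleGraph.Walk.cons_isPath_iff]; exact ⟨hp, hzs⟩, by simp⟩
      have hle := le_csSup hbdd hmem
      rw [hl] at hle
      omega

lemma exists_leaf_edge {T : SimpleGraph V} [DecidableRel T.Adj] (hT : T.IsAcyclic)
    {S : Finset (Sym2 V)} (hS : S ⊆ T.edgeFinset) (hne : S.Nonempty) :
    ∃ x y : V, x ≠ y ∧ s(x, y) ∈ S ∧ ∀ f ∈ S, f ≠ s(x, y) → x ∉ f := by
  classical
  set G := SimpleGraph.fromEdgeSet (↑S : Set (Sym2 V)) with hG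
  have hle : G ≤ T := by
    intro x y hxy
    rw [hG, SimpleGraph.fromEdgeSet_adj] at hxy
    exact (T.mem_edgeSet).mp
      (SimpleGraph.mem_edgeFinset.mp (hS (by exact_mod_cast hxy.1)))
  have hGac : G.IsAcyclic := fun v c hc => hT (c.mapLe hle) (hc.mapLe hle)
  obtain ⟨e, he⟩ := hne
  obtain ⟨x0, y0, rfl⟩ : ∃ a b, e = s(a, b) := by
    induction e using Sym2.ind with | _ a b => exact ⟨a, b, rfl⟩
  have hd : x0 ≠ y0 := by
    have := T.not_isDiag_of_mem_edgeFinset (hS he); simpa using this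
  have hadj : G.Adj x0 y0 := (SimpleGraph.fromEdgeSet_adj _).mpr ⟨by exact_mod_cast he, hd⟩
  obtain ⟨x, w, hxw, huniq⟩ := exists_leaf hGac hadj
  have hxwS : s(x, w) ∈ S := by
    have := (SimpleGraph.fromEdgeSet_adj _).mp hxw
    exact_mod_cast this.1
  refine ⟨x, w, hxw.ne, hxwS, fun f hf hfe hxf => ?_⟩
  obtain ⟨z, rfl⟩ := Sym2.mem_iff_exists.mp hxf
  have hxz : x ≠ z := by
    have := T.not_isDiag_of_mem_edgeFinset (hS hf); simpa using this
  have hGxz : G.Adj x z := (SimpleGraph.fromEdgeSet_adj _).mpr ⟨by exact_mod_cast hf, hxz⟩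
  exact hfe (by rw [huniq z hGxz])

lemma main_ind {T : SimpleGraph V} [DecidableRel T.Adj] (hT : T.IsAcyclic) {k : ℕ} (hk : 3 ≤ k)
    (Y : Finset (V ⊕ Sym2 V × Fin (k - 2)))
    (hY : ∀ e ∈ T.edgeFinset, ((exE k e) ∩ Y).card = 1) :
    ∀ n (S : Finset (Sym2 V)), S.card = n → S ⊆ T.edgeFinset → S.Nonempty →
      ∃ l As : List (Finset (V ⊕ Sym2 V × Fin (k - 2))), KForest (k - 1) l As ∧ l.Nodup ∧
        l.toFinset = S.image (fun e => exE k e \ Y) := by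
  have hCcard : ∀ e ∈ T.edgeFinset, (exE k e \ Y).card = k - 1 := by
    intro e he
    have h2 : (exE k e).card = k := card_exE (by omega) (T.not_isDiag_of_mem_edgeFinset he)
    have h1 := hY e he
    have h3 := Finset.card_inter_add_card_sdiff (exE k e) Y
    omega
  have hCne : ∀ {e f : Sym2 V}, e ∈ T.edgeFinset → f ∈ T.edgeFinset → e ≠ f →
      exE k e \ Y ≠ exE k f \ Y := by
    intro e f he hf hef hEq
    have h2 : 1 < (exE k e \ Y).card := by rw [hCcard e he]; omega
    obtain ⟨z1, hz1, z2, hz2, hz12⟩ := Finset.one_lt_card.mp h2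
    have hz1' : z1 ∈ exE k f \ Y := hEq ▸ hz1
    have hz2' : z2 ∈ exE k f \ Y := hEq ▸ hz2
    obtain ⟨v1, hv1e, hv1f, rfl⟩ :=
      exE_inter hef (Finset.mem_sdiff.mp hz1).1 (Finset.mem_sdiff.mp hz1').1
    obtain ⟨v2, hv2e, hv2f, rfl⟩ :=
      exE_inter hef (Finset.mem_sdiff.mp hz2).1 (Finset.mem_sdiff.mp hz2').1
    have : v1 = v2 := by
      by_contra hv
      exact hef (Sym2.eq_of_ne_mem hv hv1e hv2e hv1f hv2f)
    exact hz12 (by rw [this])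
  intro n
  induction n using Nat.strong_induction_on with
  | _ n ih =>
    intro S hcard hS hne
    subst hcard
    by_cases h1 : S.card ≤ 1
    · obtain ⟨e, rfl⟩ := Finset.card_eq_one.mp (le_antisymm h1 (Finset.one_le_card.mpr hne))
      exact ⟨[exE k e \ Y], [], KForest.single _ (hCcard e (hS (Finset.mem_singleton_self e))),
        by simp, by simp⟩
    · push_neg at h1
      obtain ⟨x, y, hxy, heS, hleaf⟩ := exists_leaf_edge hT hS hne
      set S' := S.erase s(x, y) with hS'def
      have hS'sub : S' ⊆ T.edgeFinset := fun f hf => hS (Finset.mem_of_mem_erase hf)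
      have hS'ne : S'.Nonempty := by
        rw [← Finset.card_pos, Finset.card_erase_of_mem heS]; omega
      have hS'card : S'.card < S.card := by
        rw [Finset.card_erase_of_mem heS]; have := Finset.card_pos.mpr hne; omega
      obtain ⟨l, As, hKF, hnd, htf⟩ := ih S'.card hS'card S' rfl hS'sub hS'ne
      have hCe : (exE k s(x, y) \ Y).card = k - 1 := hCcard _ (hS heS)
      have hCe_notin : exE k s(x, y) \ Y ∉ l := by
        intro hmem
        rw [← List.mem_toFinset, htf, Finset.mem_image] at hmem
        obtain ⟨f, hf, hfeq⟩ := hmem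
        exact hCne (hS'sub hf) (hS heS) (Finset.ne_of_mem_erase hf) hfeq
      have hkey : ∀ f ∈ S', ∀ z, z ∈ exE k s(x, y) \ Y → z ∈ exE k f \ Y →
          z = Sum.inl y ∧ y ∈ f := by
        intro f hf z hz hz'
        have hef : s(x, y) ≠ f := fun hEq => Finset.ne_of_mem_erase hf hEq.symm
        obtain ⟨v, hve, hvf, rfl⟩ :=
          exE_inter hef (Finset.mem_sdiff.mp hz).1 (Finset.mem_sdiff.mp hz').1
        rcases Sym2.mem_iff.mp hve with rfl | rfl
        · exact absurd hvf (hleaf f (Finset.mem_of_mem_erase hf) hef.symm)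
        · exact ⟨rfl, hvf⟩
      obtain ⟨E0, hE0⟩ : ∃ E0, E0 ∈ l := by
        obtain ⟨F, hF⟩ := hS'ne.image (fun e => exE k e \ Y)
        exact ⟨F, by rwa [← htf, List.mem_toFinset] at hF⟩
      have hmemC : ∀ F ∈ l, ∃ f ∈ S', exE k f \ Y = F := by
        intro F hF
        rw [← List.mem_toFinset, htf, Finset.mem_image] at hF
        exact hF
      have hfinal : ∀ (A E : Finset (V ⊕ Sym2 V × Fin (k - 2))), E ∈ l → A ⊆ E →
          A ⊆ exE k s(x, y) \ Y →
          (∀ F ∈ l, Disjoint ((exE k s(x, y) \ Y) \ A) F) →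
          A.card + ((exE k s(x, y) \ Y) \ A).card = k - 1 →
          ∃ l As : List (Finset (V ⊕ Sym2 V × Fin (k - 2))), KForest (k - 1) l As ∧ l.Nodup ∧
            l.toFinset = S.image (fun e => exE k e \ Y) := by
        intro A E hE hAE hACe hdisj hcards
        have hext := KForest.extend hKF A ((exE k s(x, y) \ Y) \ A) E hE hAE hdisj hcards
        rw [Finset.union_sdiff_of_subset hACe] at hext
        refine ⟨l ++ [exE k s(x, y) \ Y], As ++ [A], hext, ?_, ?_⟩
        · refine hnd.append (List.nodup_singleton _) ?_
          intro F hF hF'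
          rw [List.mem_singleton] at hF'
          subst hF'
          exact hCe_notin hF
        · rw [List.toFinset_append, htf]
          conv_rhs => rw [← Finset.insert_erase heS]
          rw [Finset.image_insert, ← hS'def, Finset.insert_eq, Finset.union_comm]
          simp
      by_cases hA : ∃ f ∈ S', y ∈ f ∧ Sum.inl y ∉ Y
      · obtain ⟨f, hf, hyf, hyY⟩ := hA
        have hCf_mem : exE k f \ Y ∈ l := by
          rw [← List.mem_toFinset, htf]
          exact Finset.mem_image_of_mem _ hf
        have hyCf : Sum.inl y ∈ exE k f \ Y :=
          Finset.mem_sdiff.mpr ⟨mem_exE.mpr (Or.inl ⟨y, hyf, rfl⟩), hyY⟩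
        have hyCe : Sum.inl y ∈ exE k s(x, y) \ Y :=
          Finset.mem_sdiff.mpr ⟨mem_exE.mpr (Or.inl ⟨y, by simp, rfl⟩), hyY⟩
        refine hfinal {Sum.inl y} _ hCf_mem (Finset.singleton_subset_iff.mpr hyCf)
          (Finset.singleton_subset_iff.mpr hyCe) ?_ ?_
        · intro F hF
          obtain ⟨f', hf', rfl⟩ := hmemC F hF
          rw [Finset.disjoint_left]
          intro z hz hz'
          have hz1 := Finset.mem_sdiff.mp hz
          obtain ⟨rfl, -⟩ := hkey f' hf' z hz1.1 hz'
          exact hz1.2 (Finset.mem_singleton_self _)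
        · rw [Finset.card_sdiff_of_subset (Finset.singleton_subset_iff.mpr hyCe),
            Finset.card_singleton, hCe]
          omega
      · push_neg at hA
        refine hfinal ∅ E0 hE0 (Finset.empty_subset _) (Finset.empty_subset _) ?_ ?_
        · intro F hF
          obtain ⟨f', hf', rfl⟩ := hmemC F hF
          rw [Finset.disjoint_left]
          intro z hz hz'
          rw [Finset.sdiff_empty] at hz
          obtain ⟨rfl, hyf'⟩ := hkey f' hf' z hz hz'
          exact (Finset.mem_sdiff.mp hz).2 (hA f' hf' hyf')
        · rw [Finset.sdiff_empty, Finset.card_empty, hCe]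
          omega

end AuxKF

/-- If `Y` is a 1-cross-cut of `T^(k)` (it meets every edge in exactly one vertex), then
`𝒞 = { E ∖ Y : E ∈ T^(k) }` is a generalized `(k-1)`-forest. -/
theorem stmt_18 {V : Type*} [Fintype V] [DecidableEq V] (T : SimpleGraph V)
    [DecidableRel T.Adj] (hT : T.IsAcyclic) (hne : T.edgeSet.Nonempty)
    (k : ℕ) (hk : 3 ≤ k) (Y : Finset (V ⊕ Sym2 V × Fin (k - 2)))
    (hY : ∀ E ∈ expansion k T, (E ∩ Y).card = 1) :
    ∃ (l As : List (Finset (V ⊕ Sym2 V × Fin (k - 2)))),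
      KForest (k - 1) l As ∧ l.Nodup ∧
        l.toFinset = (expansion k T).image (fun E => E \ Y) := by
  classical
  have hexp : expansion k T = T.edgeFinset.image (fun e => exE k e) := rfl
  have hY' : ∀ e ∈ T.edgeFinset, ((exE k e) ∩ Y).card = 1 := fun e he =>
    hY _ (by rw [hexp]; exact Finset.mem_image_of_mem _ he)
  obtain ⟨e0, he0⟩ := hne
  have hSne : T.edgeFinset.Nonempty := ⟨e0, SimpleGraph.mem_edgeFinset.mpr he0⟩
  obtain ⟨l, As, h1, h2, h3⟩ :=
    main_ind hT hk Y hY' T.edgeFinset.card T.edgeFinset rfl (subset_refl _) hSne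
  refine ⟨l, As, h1, h2, ?_⟩
  rw [h3, hexp, Finset.image_image]
  rfl
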